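/- (Lemma 1.) Let β̂ : Ω → ℝ^p be a random vector such that almost surely β̂ = Σ^{-1/2}β̃̂ where β̃̂ is a global minimizer of the gEN criterion L computed from the random data (y, X). Then ℙ(sign(β̂) = sign(β*)) ≥ ℙ(A_n ∩ B_n), where A_n (resp. B_n) is the event that condition A (resp. condition B) holds. -/

import Mathlib

open Matrix MeasureTheory ProbabilityTheory

/-- squared Euclidean norm -/
noncomputable def norm2sq {m : ℕ} (v : Fin m → ℝ) : ℝ := ∑ i, (v i) ^ 2

/-- ℓ¹ norm -/
noncomputable def norm1 {m : ℕ} (v : Fin m → ℝ) : ℝ := ∑ i, |v i|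

/-- sign function -/
noncomputable def sgn (x : ℝ) : ℝ := if 0 < x then 1 else if x < 0 then -1 else 0


lemma sgn_of_pos {x : ℝ} (h : 0 < x) : sgn x = 1 := by unfold sgn; simp [h]
lemma sgn_of_neg {x : ℝ} (h : x < 0) : sgn x = -1 := by
  unfold sgn; simp [not_lt.mpr h.le, h]
lemma sgn_zero : sgn 0 = 0 := by unfold sgn; simp

lemma sgn_subgrad (a v : ℝ) : |a| + sgn a * v ≤ |a + v| := by
  rcases lt_trichotomy 0 a with h|h|h
  · rw [sgn_of_pos h, abs_of_pos h, one_mul]; exact le_abs_self _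
  · simp [← h, sgn_zero]
  · rw [sgn_of_neg h, abs_of_neg h]
    have := neg_abs_le (a + v); nlinarith

lemma sgn_add_of_abs_lt {a u : ℝ} (h : |u| < |a|) : sgn (a + u) = sgn a := by
  rcases lt_trichotomy 0 a with ha|ha|ha
  · rw [abs_of_pos ha] at h
    have h1 : 0 < a + u := by have := neg_abs_le u; linarith
    rw [sgn_of_pos h1, sgn_of_pos ha]
  · exfalso; rw [← ha] at h; simp at h; exact absurd h (abs_nonneg u).not_gt
  · rw [abs_of_neg ha] at h
    have h1 : a + u < 0 := by have := le_abs_self u; linarith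
    rw [sgn_of_neg h1, sgn_of_neg ha]

lemma tri2 (x y : ℝ) : |x - y| ≤ |x| + |y| := by
  have h := abs_add_le x (-y)
  rw [abs_neg, ← sub_eq_add_neg] at h
  exact h

lemma tri3 (x y z : ℝ) : |x - y - z| ≤ |x| + |y| + |z| := by
  calc |x - y - z| = |x + -y + -z| := by ring_nf
    _ ≤ |x + -y| + |-z| := abs_add_le _ _
    _ ≤ |x| + |-y| + |-z| := by linarith [abs_add_le x (-y)]
    _ = |x| + |y| + |z| := by rw [abs_neg, abs_neg]

section Blocks
variable {p q : ℕ} (hqp : q ≤ p)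

lemma sum_split (hpq : q + (p - q) = p) (f : Fin p → ℝ) :
    ∑ j, f j = (∑ j : Fin q, f (Fin.castLE hqp j)) +
      ∑ j : Fin (p - q), f (Fin.cast hpq (Fin.natAdd q j)) := by
  rw [← Fintype.sum_equiv (finCongr hpq) (fun i => f (finCongr hpq i)) f (fun i => rfl)]
  rw [Fin.sum_univ_add]
  congr 1

lemma fin_block_cases (hpq : q + (p - q) = p) (j : Fin p) :
    (∃ j' : Fin q, j = Fin.castLE hqp j') ∨
    (∃ j' : Fin (p - q), j = Fin.cast hpq (Fin.natAdd q j')) := by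
  by_cases h : (j : ℕ) < q
  · exact Or.inl ⟨⟨j, h⟩, by ext; simp⟩
  · refine Or.inr ⟨⟨(j : ℕ) - q, by omega⟩, ?_⟩
    ext; simp; omega

lemma mulVec_ext (hpq : q + (p - q) = p) {n' : ℕ} (M : Matrix (Fin n') (Fin p) ℝ) (x : Fin q → ℝ) (i : Fin n') :
    M.mulVec (fun j : Fin p => if h : (j : ℕ) < q then x ⟨j, h⟩ else 0) i
      = ∑ j : Fin q, M i (Fin.castLE hqp j) * x j := by
  simp only [Matrix.mulVec, dotProduct]
  rw [sum_split hqp hpq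
    (fun j => M i j * (if h : (j : ℕ) < q then x ⟨j, h⟩ else 0))]
  have h2 : ∀ j : Fin (p - q),
      M i (Fin.cast hpq (Fin.natAdd q j)) *
        (if h : ((Fin.cast hpq (Fin.natAdd q j) : Fin p) : ℕ) < q
          then x ⟨_, h⟩ else 0) = 0 := by
    intro j
    rw [dif_neg (by simp)]
    ring
  rw [Finset.sum_eq_zero (fun j _ => h2 j), add_zero]
  refine Finset.sum_congr rfl fun j _ => ?_
  rw [dif_pos (by simp [j.isLt] : ((Fin.castLE hqp j : Fin p) : ℕ) < q)]
  congr 1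

lemma dot_ext (hpq : q + (p - q) = p) (Sig : Matrix (Fin p) (Fin p) ℝ) (x : Fin q → ℝ) :
    (fun j : Fin p => if h : (j : ℕ) < q then x ⟨j, h⟩ else 0) ⬝ᵥ
      Sig.mulVec (fun j : Fin p => if h : (j : ℕ) < q then x ⟨j, h⟩ else 0)
    = x ⬝ᵥ (Sig.submatrix (Fin.castLE hqp) (Fin.castLE hqp)).mulVec x := by
  simp only [dotProduct]
  rw [sum_split hqp hpq]
  have h2 : ∀ j : Fin (p - q),
      (fun j : Fin p => if h : (j : ℕ) < q then x ⟨j, h⟩ else 0)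
          (Fin.cast hpq (Fin.natAdd q j)) *
        Sig.mulVec (fun j : Fin p => if h : (j : ℕ) < q then x ⟨j, h⟩ else 0)
          (Fin.cast hpq (Fin.natAdd q j)) = 0 := by
    intro j
    beta_reduce
    rw [dif_neg (by simp)]
    ring
  rw [Finset.sum_eq_zero (fun j _ => h2 j), add_zero]
  refine Finset.sum_congr rfl fun j _ => ?_
  beta_reduce
  rw [dif_pos (by simp [j.isLt] : ((Fin.castLE hqp j : Fin p) : ℕ) < q),
    mulVec_ext hqp hpq]
  simp only [Matrix.mulVec, dotProduct, Matrix.submatrix_apply]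
  congr 1

end Blocks

set_option maxHeartbeats 2000000 in
/-- Lemma 1: if almost surely β̂ = Σ^{-1/2}β̃̂ with β̃̂ a global minimizer of the gEN
    criterion, then ℙ(sign(β̂) = sign(β*)) ≥ ℙ(A_n ∩ B_n). -/
theorem stmt8 (n p q : ℕ) (hn : 1 ≤ n) (hq : 1 ≤ q) (hqp : q ≤ p)
    (Ω : Type*) [MeasureSpace Ω] [IsProbabilityMeasure (ℙ : Measure Ω)]
    (sigma : ℝ) (hsigma : 0 < sigma)
    (lam eta : ℝ) (hlam : 0 < lam) (heta : 0 < eta)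
    (Sig : Matrix (Fin p) (Fin p) ℝ) (hSig : Sig.PosDef)
    -- R is the symmetric positive definite square root Σ^{1/2}, so Σ^{-1/2} = R⁻¹
    (R : Matrix (Fin p) (Fin p) ℝ) (hR : R.PosDef) (hRR : R * R = Sig)
    -- X is a random n×p matrix whose rows are i.i.d. centered Gaussian vectors with
    -- covariance Σ
    (X : Ω → Matrix (Fin n) (Fin p) ℝ) (hX_meas : Measurable fun ω => fun i j => X ω i j)
    (hX_indep : iIndepFun (fun i ω => X ω i) ℙ)
    (hX_gauss : ∀ i : Fin n, ∀ u : Fin p → ℝ,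
      Measure.map (fun ω => ∑ j, u j * X ω i j) ℙ
        = gaussianReal 0 (Real.toNNReal (∑ j, ∑ k, u j * Sig j k * u k)))
    -- ε is a centered Gaussian vector with covariance σ²Iₙ
    (eps : Ω → Fin n → ℝ) (heps_meas : Measurable eps)
    (heps_indep : iIndepFun (fun i ω => eps ω i) ℙ)
    (heps_gauss : ∀ i : Fin n,
      Measure.map (fun ω => eps ω i) ℙ = gaussianReal 0 ⟨sigma ^ 2, sq_nonneg sigma⟩)
    -- the linear model y = Xβ* + ε
    (betastar : Fin p → ℝ)
    (hbeta1 : ∀ j : Fin p, (j : ℕ) < q → betastar j ≠ 0)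
    (hbeta2 : ∀ j : Fin p, q ≤ (j : ℕ) → betastar j = 0)
    (y : Ω → Fin n → ℝ) (hy : ∀ ω, y ω = (X ω).mulVec betastar + eps ω)
    -- the gEN criterion computed from the random data (y, X)
    (L : Ω → (Fin p → ℝ) → ℝ)
    (hL : ∀ ω bt, L ω bt =
      norm2sq (fun i => y ω i - (X ω).mulVec (R⁻¹.mulVec bt) i)
        + lam * norm1 (R⁻¹.mulVec bt) + eta * norm2sq bt)
    -- β̂ is a random vector which is a.s. Σ^{-1/2} times a global minimizer of L
    (bhat : Ω → Fin p → ℝ) (hbhat_meas : Measurable bhat)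
    (hbhat : ∀ᵐ ω ∂(ℙ : Measure Ω), ∃ bt : Fin p → ℝ,
      (∀ b : Fin p → ℝ, L ω bt ≤ L ω b) ∧ bhat ω = R⁻¹.mulVec bt)
    -- blocks and derived quantities
    (X1 : Ω → Matrix (Fin n) (Fin q) ℝ)
    (hX1 : ∀ ω, X1 ω = (X ω).submatrix id (Fin.castLE hqp))
    (X2 : Ω → Matrix (Fin n) (Fin (p - q)) ℝ)
    (hX2 : ∀ ω, X2 ω = (X ω).submatrix id
      (fun j => Fin.cast (by omega : q + (p - q) = p) (Fin.natAdd q j)))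
    (Sig11 : Matrix (Fin q) (Fin q) ℝ)
    (hSig11 : Sig11 = Sig.submatrix (Fin.castLE hqp) (Fin.castLE hqp))
    (Sig21 : Matrix (Fin (p - q)) (Fin q) ℝ)
    (hSig21 : Sig21 = Sig.submatrix
      (fun j => Fin.cast (by omega : q + (p - q) = p) (Fin.natAdd q j)) (Fin.castLE hqp))
    (beta1 : Fin q → ℝ) (hbeta1q : beta1 = fun j => betastar (Fin.castLE hqp j))
    (C11 : Ω → Matrix (Fin q) (Fin q) ℝ)
    (hC11 : ∀ ω, C11 ω = ((n : ℝ)⁻¹) • ((X1 ω)ᵀ * X1 ω))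
    (C21 : Ω → Matrix (Fin (p - q)) (Fin q) ℝ)
    (hC21 : ∀ ω, C21 ω = ((n : ℝ)⁻¹) • ((X2 ω)ᵀ * X1 ω))
    (W1 : Ω → Fin q → ℝ) (hW1 : ∀ ω, W1 ω = ((Real.sqrt n)⁻¹) • (X1 ω)ᵀ.mulVec (eps ω))
    (W2 : Ω → Fin (p - q) → ℝ)
    (hW2 : ∀ ω, W2 ω = ((Real.sqrt n)⁻¹) • (X2 ω)ᵀ.mulVec (eps ω))
    (CC11 : Ω → Matrix (Fin q) (Fin q) ℝ)
    (hCC11 : ∀ ω, CC11 ω = C11 ω + (eta / n) • Sig11)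
    (CC21 : Ω → Matrix (Fin (p - q)) (Fin q) ℝ)
    (hCC21 : ∀ ω, CC21 ω = C21 ω + (eta / n) • Sig21)
    -- the events A_n and B_n
    (An : Set Ω)
    (hAn : An = {ω | ∀ j : Fin q,
      |(CC11 ω)⁻¹.mulVec (W1 ω) j| < Real.sqrt n *
        (|beta1 j| - (lam / (2 * n)) * |((CC11 ω)⁻¹.mulVec fun k => sgn (beta1 k)) j|
          - (eta / n) * |(CC11 ω)⁻¹.mulVec (Sig11.mulVec beta1) j|)})
    (Bn : Set Ω)
    (hBn : Bn = {ω | ∀ j : Fin (p - q),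
      |(CC21 ω * (CC11 ω)⁻¹).mulVec (W1 ω) j - W2 ω j| ≤ lam / (2 * Real.sqrt n)
        - (lam / (2 * Real.sqrt n)) *
          |((CC21 ω * (CC11 ω)⁻¹).mulVec
              ((fun k => sgn (beta1 k)) + (2 * eta / lam) • Sig11.mulVec beta1)
            - (2 * eta / lam) • Sig21.mulVec beta1) j|}) :
    ℙ (An ∩ Bn) ≤ ℙ {ω | ∀ j : Fin p, sgn (bhat ω j) = sgn (betastar j)} := by

  classical
  have hpq' : q + (p - q) = p := by omega
  have hn0 : (0:ℝ) < n := by exact_mod_cast hn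
  have hnne : (n:ℝ) ≠ 0 := ne_of_gt hn0
  have hsn : (0:ℝ) < Real.sqrt n := Real.sqrt_pos.mpr hn0
  have hsn2 : Real.sqrt n * Real.sqrt n = (n:ℝ) := Real.mul_self_sqrt hn0.le
  have c3 : (n:ℝ) * (Real.sqrt n)⁻¹ = Real.sqrt n := by
    rw [eq_comm, eq_mul_inv_iff_mul_eq₀ (ne_of_gt hsn)]; exact hsn2
  have c1 : (n:ℝ) * (eta / n) = eta := by field_simp
  have c2 : (n:ℝ) * (lam / (2 * n)) = lam / 2 := by field_simp
  have c4 : lam * (2 * eta / lam) = 2 * eta := by field_simp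
  set G : Set Ω := {ω | ∃ bt : Fin p → ℝ, (∀ b, L ω bt ≤ L ω b) ∧ bhat ω = R⁻¹.mulVec bt}
    with hGdef
  have hGc : ℙ Gᶜ = 0 := by
    have h := ae_iff.mp hbhat
    simpa [hGdef, Set.compl_setOf] using h
  have key : An ∩ Bn ∩ G ⊆ {ω | ∀ j, sgn (bhat ω j) = sgn (betastar j)} := by
    rintro ω ⟨⟨hAω, hBω⟩, bt, hmin, hbt⟩
    rw [hAn, Set.mem_setOf_eq] at hAω
    rw [hBn, Set.mem_setOf_eq] at hBω
    simp only [Set.mem_setOf_eq]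
    -- abbreviations
    set s1 : Fin q → ℝ := fun k => sgn (beta1 k) with hs1
    set w0 : Fin q → ℝ :=
      (Real.sqrt n)⁻¹ • W1 ω - (eta / n) • Sig11.mulVec beta1 - (lam / (2 * n)) • s1
      with hw0
    set u : Fin q → ℝ := (CC11 ω)⁻¹.mulVec w0 with hu
    set b1 : Fin q → ℝ := beta1 + u with hb1def
    set bf : Fin p → ℝ := fun j => if h : (j : ℕ) < q then b1 ⟨j, h⟩ else 0 with hbf
    -- basic block component facts
    have hbf1 : ∀ j : Fin q, bf (Fin.castLE hqp j) = b1 j := by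
      intro j; rw [hbf]; simp
    have hbf2 : ∀ j : Fin (p - q), bf (Fin.cast hpq' (Fin.natAdd q j)) = 0 := by
      intro j; rw [hbf]
      exact dif_neg (by simp)
    have hbs1 : ∀ j : Fin q, betastar (Fin.castLE hqp j) = beta1 j := by
      intro j; rw [hbeta1q]
    have hbse : betastar = fun j : Fin p => if h : (j : ℕ) < q then beta1 ⟨j, h⟩ else 0 := by
      funext j
      by_cases h : (j : ℕ) < q
      · rw [dif_pos h, hbeta1q]
        rfl
      · rw [dif_neg h]; exact hbeta2 j (not_lt.mp h)
    have hbs2 : ∀ j : Fin (p - q), betastar (Fin.cast hpq' (Fin.natAdd q j)) = 0 := by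
      intro j; apply hbeta2; simp
    have hX1e : ∀ i j, X1 ω i j = X ω i (Fin.castLE hqp j) := by
      intro i j; rw [hX1]; rfl
    have hX2e : ∀ i j, X2 ω i j = X ω i (Fin.cast hpq' (Fin.natAdd q j)) := by
      intro i j; rw [hX2]; rfl
    have hS11e : ∀ j k, Sig11 j k = Sig (Fin.castLE hqp j) (Fin.castLE hqp k) := by
      intro j k; rw [hSig11]; rfl
    have hS21e : ∀ j k, Sig21 j k = Sig (Fin.cast hpq' (Fin.natAdd q j)) (Fin.castLE hqp k) := by
      intro j k; rw [hSig21]; rfl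
    -- positive definiteness
    have hSig11pd : Sig11.PosDef := by
      refine Matrix.PosDef.of_dotProduct_mulVec_pos ?_ ?_
      · rw [hSig11]; exact hSig.1.submatrix _
      · intro x hx
        have hx'ne : (fun j : Fin p => if h : (j : ℕ) < q then x ⟨j, h⟩ else 0) ≠ 0 := by
          obtain ⟨k, hk⟩ := Function.ne_iff.mp hx
          refine Function.ne_iff.mpr ⟨Fin.castLE hqp k, ?_⟩
          simpa using hk
        have hpos := hSig.dotProduct_mulVec_pos hx'ne
        simp only [star_trivial] at hpos ⊢
        rw [dot_ext hqp hpq'] at hpos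
        rw [hSig11]
        exact hpos
    have hCC11pd : (CC11 ω).PosDef := by
      rw [hCC11]
      refine Matrix.PosDef.of_dotProduct_mulVec_pos ?_ ?_
      · have h1 : (C11 ω).IsHermitian := by
          rw [hC11]
          show ((n:ℝ)⁻¹ • ((X1 ω)ᵀ * X1 ω))ᵀ = (n:ℝ)⁻¹ • ((X1 ω)ᵀ * X1 ω)
          rw [Matrix.transpose_smul, Matrix.transpose_mul, Matrix.transpose_transpose]
        have h2 : ((eta / n) • Sig11).IsHermitian := by
          show ((eta / n) • Sig11)ᵀ = (eta / n) • Sig11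
          rw [Matrix.transpose_smul]
          congr 1
          exact hSig11pd.1
        exact h1.add h2
      · intro x hx
        have hq1 : x ⬝ᵥ (C11 ω).mulVec x
            = (n:ℝ)⁻¹ * (((X1 ω).mulVec x) ⬝ᵥ ((X1 ω).mulVec x)) := by
          rw [hC11, Matrix.smul_mulVec, dotProduct_smul, smul_eq_mul]
          congr 1
          rw [← Matrix.mulVec_mulVec, Matrix.dotProduct_mulVec, Matrix.vecMul_transpose]
        have hq2 : (0:ℝ) < x ⬝ᵥ Sig11.mulVec x := by simpa using hSig11pd.dotProduct_mulVec_pos hx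
        have hq3 : (0:ℝ) ≤ ((X1 ω).mulVec x) ⬝ᵥ ((X1 ω).mulVec x) :=
          Finset.sum_nonneg fun i _ => mul_self_nonneg _
        have hexp : x ⬝ᵥ ((C11 ω) + (eta / n) • Sig11).mulVec x
            = x ⬝ᵥ (C11 ω).mulVec x + (eta / n) * (x ⬝ᵥ Sig11.mulVec x) := by
          rw [Matrix.add_mulVec, dotProduct_add, Matrix.smul_mulVec,
            dotProduct_smul, smul_eq_mul]
        simp only [star_trivial]
        rw [hexp, hq1]
        have hc1 : (0:ℝ) < eta / n := div_pos heta hn0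
        positivity
    have hCCinv : CC11 ω * (CC11 ω)⁻¹ = 1 :=
      Matrix.mul_nonsing_inv _ (isUnit_iff_ne_zero.mpr (ne_of_gt hCC11pd.det_pos))
    have hCu : (CC11 ω).mulVec u = w0 := by
      rw [hu, Matrix.mulVec_mulVec, hCCinv, Matrix.one_mulVec]
    -- |u j| < |beta1 j|
    have habs_u : ∀ j, |u j| < |beta1 j| := by
      intro j
      have hA := hAω j
      have hlin : u j = (Real.sqrt n)⁻¹ * ((CC11 ω)⁻¹.mulVec (W1 ω)) j
          - (eta / n) * ((CC11 ω)⁻¹.mulVec (Sig11.mulVec beta1)) j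
          - (lam / (2 * n)) * ((CC11 ω)⁻¹.mulVec s1) j := by
        rw [hu, hw0]
        simp [Matrix.mulVec_sub, Matrix.mulVec_smul]
      have htri : |u j| ≤ (Real.sqrt n)⁻¹ * |((CC11 ω)⁻¹.mulVec (W1 ω)) j|
          + (eta / n) * |((CC11 ω)⁻¹.mulVec (Sig11.mulVec beta1)) j|
          + (lam / (2 * n)) * |((CC11 ω)⁻¹.mulVec s1) j| := by
        rw [hlin]
        refine le_trans (tri3 _ _ _) ?_
        rw [abs_mul, abs_mul, abs_mul,
          abs_of_pos (inv_pos.mpr hsn), abs_of_pos (div_pos heta hn0),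
          abs_of_pos (div_pos hlam (by linarith : (0:ℝ) < 2 * n))]
      have hmul : (Real.sqrt n)⁻¹ * |((CC11 ω)⁻¹.mulVec (W1 ω)) j|
          < (Real.sqrt n)⁻¹ * (Real.sqrt n *
            (|beta1 j| - lam / (2 * n) * |((CC11 ω)⁻¹.mulVec s1) j|
              - eta / n * |((CC11 ω)⁻¹.mulVec (Sig11.mulVec beta1)) j|)) :=
        mul_lt_mul_of_pos_left hA (inv_pos.mpr hsn)
      rw [← mul_assoc, inv_mul_cancel₀ (ne_of_gt hsn), one_mul] at hmul
      linarith
    have hb1sgn : ∀ j, sgn (b1 j) = sgn (beta1 j) := by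
      intro j
      rw [hb1def]
      exact sgn_add_of_abs_lt (habs_u j)
    -- the residual
    set r : Fin n → ℝ := fun i => y ω i - (X ω).mulVec bf i with hr
    have hXbf : ∀ i, (X ω).mulVec bf i = (X1 ω).mulVec b1 i := by
      intro i
      rw [hbf, mulVec_ext hqp hpq']
      simp only [Matrix.mulVec, dotProduct]
      exact Finset.sum_congr rfl fun j _ => by rw [hX1e]
    have hXbs : ∀ i, (X ω).mulVec betastar i = (X1 ω).mulVec beta1 i := by
      intro i
      rw [hbse, mulVec_ext hqp hpq']
      simp only [Matrix.mulVec, dotProduct]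
      exact Finset.sum_congr rfl fun j _ => by rw [hX1e]
    have hrval : ∀ i, r i = eps ω i - (X1 ω).mulVec u i := by
      intro i
      rw [hr]
      simp only [hy ω, Pi.add_apply]
      rw [hXbf, hXbs, hb1def, Matrix.mulVec_add, Pi.add_apply]
      ring
    have hrfun : r = eps ω - (X1 ω).mulVec u := funext hrval
    -- transpose components
    have hX1r : ∀ j : Fin q, ((X ω)ᵀ.mulVec r) (Fin.castLE hqp j)
        = Real.sqrt n * W1 ω j - n * ((C11 ω).mulVec u) j := by
      intro j
      have h0 : ((X ω)ᵀ.mulVec r) (Fin.castLE hqp j) = ((X1 ω)ᵀ.mulVec r) j := by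
        simp only [Matrix.mulVec, dotProduct, Matrix.transpose_apply]
        exact Finset.sum_congr rfl fun i _ => by rw [hX1e]
      rw [h0, hrfun, Matrix.mulVec_sub, Pi.sub_apply]
      have hW : ((X1 ω)ᵀ.mulVec (eps ω)) j = Real.sqrt n * W1 ω j := by
        rw [hW1]
        simp only [Pi.smul_apply, smul_eq_mul]
        rw [← mul_assoc, mul_inv_cancel₀ (ne_of_gt hsn), one_mul]
      have hC : ((X1 ω)ᵀ.mulVec ((X1 ω).mulVec u)) j = n * ((C11 ω).mulVec u) j := by
        rw [Matrix.mulVec_mulVec, hC11, Matrix.smul_mulVec]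
        simp only [Pi.smul_apply, smul_eq_mul]
        rw [← mul_assoc, mul_inv_cancel₀ hnne, one_mul]
      rw [hW, hC]
    have hX2r : ∀ j : Fin (p - q), ((X ω)ᵀ.mulVec r) (Fin.cast hpq' (Fin.natAdd q j))
        = Real.sqrt n * W2 ω j - n * ((C21 ω).mulVec u) j := by
      intro j
      have h0 : ((X ω)ᵀ.mulVec r) (Fin.cast hpq' (Fin.natAdd q j)) = ((X2 ω)ᵀ.mulVec r) j := by
        simp only [Matrix.mulVec, dotProduct, Matrix.transpose_apply]
        exact Finset.sum_congr rfl fun i _ => by rw [hX2e]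
      rw [h0, hrfun, Matrix.mulVec_sub, Pi.sub_apply]
      have hW : ((X2 ω)ᵀ.mulVec (eps ω)) j = Real.sqrt n * W2 ω j := by
        rw [hW2]
        simp only [Pi.smul_apply, smul_eq_mul]
        rw [← mul_assoc, mul_inv_cancel₀ (ne_of_gt hsn), one_mul]
      have hC : ((X2 ω)ᵀ.mulVec ((X1 ω).mulVec u)) j = n * ((C21 ω).mulVec u) j := by
        rw [Matrix.mulVec_mulVec, hC21, Matrix.smul_mulVec]
        simp only [Pi.smul_apply, smul_eq_mul]
        rw [← mul_assoc, mul_inv_cancel₀ hnne, one_mul]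
      rw [hW, hC]
    have hSbf1 : ∀ j : Fin q, (Sig.mulVec bf) (Fin.castLE hqp j) = (Sig11.mulVec b1) j := by
      intro j
      rw [hbf, mulVec_ext hqp hpq']
      simp only [Matrix.mulVec, dotProduct]
      exact Finset.sum_congr rfl fun k _ => by rw [hS11e]
    have hSbf2 : ∀ j : Fin (p - q), (Sig.mulVec bf) (Fin.cast hpq' (Fin.natAdd q j))
        = (Sig21.mulVec b1) j := by
      intro j
      rw [hbf, mulVec_ext hqp hpq']
      simp only [Matrix.mulVec, dotProduct]
      exact Finset.sum_congr rfl fun k _ => by rw [hS21e]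
    -- the gradient-like vector
    set gvec : Fin p → ℝ :=
      fun j => -2 * ((X ω)ᵀ.mulVec r) j + 2 * eta * (Sig.mulVec bf) j with hgvec
    have hg1 : ∀ j : Fin q, gvec (Fin.castLE hqp j) = -(lam * s1 j) := by
      intro j
      rw [hgvec]
      simp only
      rw [hX1r j, hSbf1 j]
      have hE : ((C11 ω).mulVec u) j + (eta / n) * ((Sig11.mulVec u)) j
          = (Real.sqrt n)⁻¹ * W1 ω j - (eta / n) * (Sig11.mulVec beta1) j
            - (lam / (2 * n)) * s1 j := by
        have h := congrFun hCu j
        rw [hCC11, Matrix.add_mulVec, Matrix.smul_mulVec] at h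
        simp only [Pi.add_apply, Pi.smul_apply, smul_eq_mul] at h
        rw [h, hw0]
        simp
      have hSb : (Sig11.mulVec b1) j = (Sig11.mulVec beta1) j + (Sig11.mulVec u) j := by
        rw [hb1def, Matrix.mulVec_add, Pi.add_apply]
      rw [hSb]
      linear_combination (2 * (n:ℝ)) * hE + 2 * (W1 ω j) * c3
        - 2 * ((Sig11.mulVec beta1) j + (Sig11.mulVec u) j) * c1 - 2 * (s1 j) * c2
    have hg2 : ∀ j : Fin (p - q), |gvec (Fin.cast hpq' (Fin.natAdd q j))| ≤ lam := by
      intro j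
      have hB := hBω j
      have hval : gvec (Fin.cast hpq' (Fin.natAdd q j))
          = 2 * Real.sqrt n * (((CC21 ω * (CC11 ω)⁻¹).mulVec (W1 ω)) j - W2 ω j)
            - lam * (((CC21 ω * (CC11 ω)⁻¹).mulVec
                (s1 + (2 * eta / lam) • Sig11.mulVec beta1)
              - (2 * eta / lam) • Sig21.mulVec beta1) j) := by
        rw [hgvec]
        simp only
        rw [hX2r j, hSbf2 j]
        have hE2a : ((C21 ω).mulVec u) j + (eta / n) * ((Sig21.mulVec u)) j
            = ((CC21 ω).mulVec u) j := by
          rw [hCC21, Matrix.add_mulVec, Matrix.smul_mulVec]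
          simp
        have hMu : ((CC21 ω).mulVec u) j
            = (Real.sqrt n)⁻¹ * ((CC21 ω * (CC11 ω)⁻¹).mulVec (W1 ω)) j
              - (eta / n) * ((CC21 ω * (CC11 ω)⁻¹).mulVec (Sig11.mulVec beta1)) j
              - (lam / (2 * n)) * ((CC21 ω * (CC11 ω)⁻¹).mulVec s1) j := by
          have h1 : (CC21 ω).mulVec u = (CC21 ω * (CC11 ω)⁻¹).mulVec w0 := by
            rw [hu, Matrix.mulVec_mulVec]
          rw [h1, hw0]
          simp [Matrix.mulVec_sub, Matrix.mulVec_smul]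
        have hTval : (((CC21 ω * (CC11 ω)⁻¹).mulVec
              (s1 + (2 * eta / lam) • Sig11.mulVec beta1)
            - (2 * eta / lam) • Sig21.mulVec beta1) j)
            = ((CC21 ω * (CC11 ω)⁻¹).mulVec s1) j
              + (2 * eta / lam) * ((CC21 ω * (CC11 ω)⁻¹).mulVec (Sig11.mulVec beta1)) j
              - (2 * eta / lam) * (Sig21.mulVec beta1) j := by
          rw [Matrix.mulVec_add, Matrix.mulVec_smul]
          simp
        have hSb : (Sig21.mulVec b1) j = (Sig21.mulVec beta1) j + (Sig21.mulVec u) j := by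
          rw [hb1def, Matrix.mulVec_add, Pi.add_apply]
        rw [hSb, hTval]
        linear_combination (2 * (n:ℝ)) * hE2a + (2 * (n:ℝ)) * hMu
          + 2 * (((CC21 ω * (CC11 ω)⁻¹).mulVec (W1 ω)) j) * c3
          - 2 * ((Sig21.mulVec u) j) * c1
          - 2 * (((CC21 ω * (CC11 ω)⁻¹).mulVec (Sig11.mulVec beta1)) j) * c1
          + (((CC21 ω * (CC11 ω)⁻¹).mulVec (Sig11.mulVec beta1)) j) * c4
          - 2 * (((CC21 ω * (CC11 ω)⁻¹).mulVec s1) j) * c2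
          - ((Sig21.mulVec beta1) j) * c4
      rw [hval]
      set D := ((CC21 ω * (CC11 ω)⁻¹).mulVec (W1 ω)) j - W2 ω j with hD
      set T := (((CC21 ω * (CC11 ω)⁻¹).mulVec
          (s1 + (2 * eta / lam) • Sig11.mulVec beta1)
        - (2 * eta / lam) • Sig21.mulVec beta1) j) with hT
      have hDb : |D| ≤ lam / (2 * Real.sqrt n) - lam / (2 * Real.sqrt n) * |T| := hB
      have h1 : |2 * Real.sqrt n * D - lam * T| ≤ 2 * Real.sqrt n * |D| + lam * |T| := by
        calc |2 * Real.sqrt n * D - lam * T| ≤ |2 * Real.sqrt n * D| + |lam * T| :=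
              tri2 _ _
          _ = 2 * Real.sqrt n * |D| + lam * |T| := by
              rw [abs_mul (2 * Real.sqrt n) D, abs_mul lam T, abs_of_pos hlam,
                abs_of_pos (by linarith : (0:ℝ) < 2 * Real.sqrt n)]
      have h2 : 2 * Real.sqrt n * |D| ≤ lam - lam * |T| := by
        have h3 := mul_le_mul_of_nonneg_left hDb (by linarith : (0:ℝ) ≤ 2 * Real.sqrt n)
        have h4 : 2 * Real.sqrt n * (lam / (2 * Real.sqrt n)
            - lam / (2 * Real.sqrt n) * |T|) = lam - lam * |T| := by
          field_simp
        linarith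
      linarith
    -- objective F and strict minimality at bf
    set F : (Fin p → ℝ) → ℝ := fun w =>
      norm2sq (fun i => y ω i - (X ω).mulVec w i) + lam * norm1 w
        + eta * (w ⬝ᵥ Sig.mulVec w) with hF
    have hRsymm : Rᵀ = R := hR.1
    have hSigsymm : Sigᵀ = Sig := hSig.1
    have hRinv1 : R * R⁻¹ = 1 :=
      Matrix.mul_nonsing_inv _ (isUnit_iff_ne_zero.mpr (ne_of_gt hR.det_pos))
    have hRinv2 : R⁻¹ * R = 1 :=
      Matrix.nonsing_inv_mul _ (isUnit_iff_ne_zero.mpr (ne_of_gt hR.det_pos))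
    have hLF : ∀ b, L ω b = F (R⁻¹.mulVec b) := by
      intro b
      rw [hL, hF]
      simp only
      have hkey : norm2sq b = (R⁻¹.mulVec b) ⬝ᵥ Sig.mulVec (R⁻¹.mulVec b) := by
        have hwb : R.mulVec (R⁻¹.mulVec b) = b := by
          rw [Matrix.mulVec_mulVec, hRinv1, Matrix.one_mulVec]
        have e0 : norm2sq b = b ⬝ᵥ b := by
          simp [norm2sq, dotProduct, sq]
        rw [e0, ← hRR, ← Matrix.mulVec_mulVec, Matrix.dotProduct_mulVec]
        conv_lhs => rw [← hwb]
        congr 1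
        rw [← hRsymm, Matrix.vecMul_transpose, hRsymm]
      rw [hkey]
    have hFmin : ∀ w, w ≠ bf → F bf < F w := by
      intro w hw
      set v : Fin p → ℝ := w - bf with hv
      have hvne : v ≠ 0 := sub_ne_zero.mpr hw
      have hwv : ∀ j, w j = bf j + v j := by
        intro j; rw [hv]; simp
      have hwfun : w = bf + v := funext hwv
      have hXv : ∀ i, (X ω).mulVec w i = (X ω).mulVec bf i + (X ω).mulVec v i := by
        intro i
        rw [hwfun, Matrix.mulVec_add, Pi.add_apply]
      have hdc : v ⬝ᵥ ((X ω)ᵀ.mulVec r) = ∑ i, r i * (X ω).mulVec v i := by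
        rw [Matrix.dotProduct_mulVec, Matrix.vecMul_transpose, dotProduct_comm]
        simp [dotProduct, mul_comm]
      have hE1 : norm2sq (fun i => y ω i - (X ω).mulVec w i)
          = norm2sq r - 2 * (v ⬝ᵥ ((X ω)ᵀ.mulVec r)) + norm2sq ((X ω).mulVec v) := by
        unfold norm2sq
        rw [hdc, Finset.mul_sum, ← Finset.sum_sub_distrib, ← Finset.sum_add_distrib]
        refine Finset.sum_congr rfl fun i _ => ?_
        beta_reduce
        have hri : r i = y ω i - (X ω).mulVec bf i := by rw [hr]
        rw [hXv i, hri]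
        ring
      have hE2 : w ⬝ᵥ Sig.mulVec w = bf ⬝ᵥ Sig.mulVec bf + 2 * (v ⬝ᵥ Sig.mulVec bf)
          + v ⬝ᵥ Sig.mulVec v := by
        have hsym : bf ⬝ᵥ Sig.mulVec v = v ⬝ᵥ Sig.mulVec bf := by
          rw [Matrix.dotProduct_mulVec]
          conv_lhs => rw [← hSigsymm]
          rw [Matrix.vecMul_transpose, dotProduct_comm]
        rw [hwfun]
        simp only [Matrix.mulVec_add, dotProduct_add, add_dotProduct]
        linarith [hsym]
      have hgsum : ∑ j, gvec j * v j
          = -2 * (v ⬝ᵥ ((X ω)ᵀ.mulVec r)) + 2 * eta * (v ⬝ᵥ Sig.mulVec bf) := by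
        rw [hgvec]
        simp only [dotProduct]
        rw [Finset.mul_sum, Finset.mul_sum, ← Finset.sum_add_distrib]
        exact Finset.sum_congr rfl fun j _ => by ring
      have hper : ∀ j ∈ Finset.univ, (0:ℝ) ≤ gvec j * v j + lam * (|w j| - |bf j|) := by
        intro j _
        rcases fin_block_cases hqp hpq' j with ⟨j', rfl⟩ | ⟨j', rfl⟩
        · have h1 := sgn_subgrad (bf (Fin.castLE hqp j')) (v (Fin.castLE hqp j'))
          rw [show bf (Fin.castLE hqp j') + v (Fin.castLE hqp j') = w (Fin.castLE hqp j')
            from (hwv _).symm] at h1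
          have h2 : sgn (bf (Fin.castLE hqp j')) = s1 j' := by
            rw [hbf1 j', hb1sgn j', hs1]
          rw [h2] at h1
          rw [hg1 j']
          have h3 : lam * (s1 j' * v (Fin.castLE hqp j'))
              ≤ lam * (|w (Fin.castLE hqp j')| - |bf (Fin.castLE hqp j')|) :=
            mul_le_mul_of_nonneg_left (by linarith) hlam.le
          nlinarith [h3]
        · have hbfz : bf (Fin.cast hpq' (Fin.natAdd q j')) = 0 := hbf2 j'
          have h1 := hg2 j'
          have hwj : w (Fin.cast hpq' (Fin.natAdd q j')) = v (Fin.cast hpq' (Fin.natAdd q j')) := by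
            rw [hwv, hbfz, zero_add]
          have h2 : |gvec (Fin.cast hpq' (Fin.natAdd q j')) * v (Fin.cast hpq' (Fin.natAdd q j'))|
              ≤ lam * |v (Fin.cast hpq' (Fin.natAdd q j'))| := by
            rw [abs_mul]
            exact mul_le_mul_of_nonneg_right h1 (abs_nonneg _)
          have h3 := neg_abs_le (gvec (Fin.cast hpq' (Fin.natAdd q j'))
            * v (Fin.cast hpq' (Fin.natAdd q j')))
          rw [hbfz, hwj]
          simp only [abs_zero, sub_zero]
          linarith
      have hsum : (0:ℝ) ≤ ∑ j, (gvec j * v j + lam * (|w j| - |bf j|)) :=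
        Finset.sum_nonneg hper
      have hquad : (0:ℝ) < v ⬝ᵥ Sig.mulVec v := by simpa using hSig.dotProduct_mulVec_pos hvne
      have hAv : (0:ℝ) ≤ norm2sq ((X ω).mulVec v) :=
        Finset.sum_nonneg fun i _ => sq_nonneg _
      have hsplitsum : ∑ j, (gvec j * v j + lam * (|w j| - |bf j|))
          = (∑ j, gvec j * v j) + lam * (norm1 w - norm1 bf) := by
        rw [Finset.sum_add_distrib]
        congr 1
        unfold norm1
        rw [← Finset.sum_sub_distrib, Finset.mul_sum]
      have hnr : norm2sq (fun i => y ω i - (X ω).mulVec bf i) = norm2sq r := by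
        rw [hr]
      have hFw : F w - F bf = (∑ j, (gvec j * v j + lam * (|w j| - |bf j|)))
          + norm2sq ((X ω).mulVec v) + eta * (v ⬝ᵥ Sig.mulVec v) := by
        rw [hF]
        simp only
        rw [hE1, hE2, hsplitsum, hgsum, hnr]
        ring
      have hpos := mul_pos heta hquad
      linarith [hsum, hAv, hFw, hpos]
    have hbhatf : bhat ω = bf := by
      have h1 : F (R⁻¹.mulVec bt) ≤ F bf := by
        rw [← hLF bt]
        calc L ω bt ≤ L ω (R.mulVec bf) := hmin _
          _ = F (R⁻¹.mulVec (R.mulVec bf)) := hLF _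
          _ = F bf := by rw [Matrix.mulVec_mulVec, hRinv2, Matrix.one_mulVec]
      have h2 : R⁻¹.mulVec bt = bf := by
        by_contra h
        exact absurd h1 (not_le.mpr (hFmin _ h))
      rw [hbt, h2]
    intro j
    rw [hbhatf]
    rcases fin_block_cases hqp hpq' j with ⟨j', rfl⟩ | ⟨j', rfl⟩
    · rw [hbf1 j', hb1sgn j', hbs1 j']
    · rw [hbf2 j', hbs2 j', sgn_zero]
  calc ℙ (An ∩ Bn) ≤ ℙ ((An ∩ Bn ∩ G) ∪ Gᶜ) := by
        apply measure_mono
        intro ω hω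
        by_cases h : ω ∈ G
        · exact Or.inl ⟨hω, h⟩
        · exact Or.inr h
    _ ≤ ℙ (An ∩ Bn ∩ G) + ℙ Gᶜ := measure_union_le _ _
    _ = ℙ (An ∩ Bn ∩ G) := by rw [hGc, add_zero]
    _ ≤ _ := measure_mono key
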